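/- Let Y be a vector lattice and X a linear subspace of Y that is order dense in Y. If X has the Riesz decomposition property, then X is weakly pervasive in Y. -/

import Mathlib

/-- Let `Y` be a vector lattice and `X` an order dense linear subspace of
`Y`. If `X` has the Riesz decomposition property, then `X` is weakly pervasive in `Y`. -/
theorem statement9
    {Y : Type*} [Lattice Y] [AddCommGroup Y] [Module ℝ Y]
    [CovariantClass Y Y (· + ·) (· ≤ ·)] [PosSMulMono ℝ Y]
    (X : Submodule ℝ Y)
    (hdense : ∀ y : Y, IsGLB {x : Y | x ∈ X ∧ y ≤ x} y)
    (hRDP : ∀ x₁ ∈ X, ∀ x₂ ∈ X, ∀ z ∈ X, 0 ≤ x₁ → 0 ≤ x₂ → 0 ≤ z → z ≤ x₁ + x₂ →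
      ∃ z₁ ∈ X, ∃ z₂ ∈ X, 0 ≤ z₁ ∧ z₁ ≤ x₁ ∧ 0 ≤ z₂ ∧ z₂ ≤ x₂ ∧ z = z₁ + z₂) :
    ∀ b₁ ∈ X, ∀ b₂ ∈ X, 0 < b₁ ⊓ b₂ → ∃ x ∈ X, 0 < x ∧ x ≤ b₁ ⊓ b₂ := by
  intro b₁ hb₁ b₂ hb₂ hpos
  have hswap : CovariantClass Y Y (Function.swap (· + ·)) (· ≤ ·) :=
    ⟨fun c a b h => by
      simpa [add_comm] using (add_le_add_right h c : c + a ≤ c + b)⟩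
  -- not everything above sup is above the sum
  have hne : ¬ b₁ + b₂ ≤ b₁ ⊔ b₂ := by
    intro h
    have h1 : b₁ ⊓ b₂ + (b₁ ⊔ b₂) ≤ 0 + (b₁ ⊔ b₂) := by
      rw [inf_add_sup, zero_add]; exact h
    exact absurd (le_of_add_le_add_right h1) (not_le_of_gt hpos)
  -- find a ∈ X with b₁ ⊔ b₂ ≤ a but ¬ b₁ + b₂ ≤ a
  obtain ⟨a, ⟨haX, hsup_le⟩, hna⟩ :
      ∃ a, (a ∈ X ∧ b₁ ⊔ b₂ ≤ a) ∧ ¬ b₁ + b₂ ≤ a := by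
    by_contra hcon
    push_neg at hcon
    exact hne ((hdense (b₁ ⊔ b₂)).2 fun x hx => hcon x hx)
  have hb2a : b₂ ≤ a := le_trans le_sup_right hsup_le
  have hb1a : b₁ ≤ a := le_trans le_sup_left hsup_le
  have hamb2 : (0:Y) ≤ a - b₂ := sub_nonneg.mpr hb2a
  have hb1pos : (0:Y) ≤ b₁ := le_trans hpos.le inf_le_left
  have hb2pos : (0:Y) ≤ b₂ := le_trans hpos.le inf_le_right
  have hle : b₁ ≤ (a - b₂) + b₂ := by rw [sub_add_cancel]; exact hb1a
  obtain ⟨z₁, hz₁X, z₂, hz₂X, hz₁0, hz₁le, hz₂0, hz₂le, heq⟩ :=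
    hRDP (a - b₂) (X.sub_mem haX hb₂) b₂ hb₂ b₁ hb₁ hamb2 hb2pos hb1pos hle
  refine ⟨z₂, hz₂X, ?_, ?_⟩
  · refine lt_of_le_of_ne hz₂0 fun h0 => ?_
    apply hna
    -- z₂ = b₁ - z₁ ≥ b₁ - (a - b₂) = b₁ + b₂ - a
    have : b₁ + b₂ - a ≤ z₂ := by
      have : b₁ - (a - b₂) ≤ b₁ - z₁ := sub_le_sub_left hz₁le b₁
      calc b₁ + b₂ - a = b₁ - (a - b₂) := by abel
        _ ≤ b₁ - z₁ := this
        _ = z₂ := by rw [heq]; abel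
    have h2 : b₁ + b₂ - a ≤ 0 := this.trans (le_of_eq h0.symm)
    exact sub_nonpos.mp h2
  · refine le_inf ?_ hz₂le
    have : z₂ ≤ z₁ + z₂ := le_add_of_nonneg_left hz₁0
    rwa [← heq] at this
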